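/- Let B = [[B₁,B₃],[B₂,B₄]] be an (n+m)×(n+m) skew-symmetrizable integer matrix with B₂ ∈ M_{m×n}(ℤ_{≥0}). If the sequence (k_1,…,k_s,k_{s+1},…,k_{s+p}) with k_1,…,k_s ∈ {1,…,n} and k_{s+1},…,k_{s+p} ∈ {n+1,…,n+m} is a maximal green sequence of B, then (k_1,…,k_s) is a maximal green sequence of B₁ and (k_{s+1}−n,…,k_{s+p}−n) is a maximal green sequence of B₄. -/

import Mathlib

variable {ι : Type} [Fintype ι] [DecidableEq ι]

/-- Mutation in direction `k` of a `2N × N` integer matrix, rows indexed by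
`ι ⊕ ι` (the principal part is the `Sum.inl` block). -/
def mutate (k : ι) (B : Matrix (ι ⊕ ι) ι ℤ) : Matrix (ι ⊕ ι) ι ℤ :=
  fun i j =>
    if i = Sum.inl k ∨ j = k then -B i j
    else B i j + Int.sign (B i k) * max (B i k * B (Sum.inl k) j) 0

/-- Apply a sequence of mutations `μ_{k_s} ⋯ μ_{k_1}` (the list is `[k_1, …, k_s]`). -/
def mutateSeq (L : List ι) (B : Matrix (ι ⊕ ι) ι ℤ) : Matrix (ι ⊕ ι) ι ℤ :=
  L.foldl (fun M k => mutate k M) B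

/-- The C-matrix of `B` along the mutation sequence `L`: the lower block of
the mutation of `[B; I]`. -/
def Cmat (B : Matrix ι ι ℤ) (L : List ι) : Matrix ι ι ℤ :=
  fun i j => mutateSeq L (Matrix.fromRows B 1) (Sum.inr i) j

/-- A column index `j` is green in the C-matrix along `L` if its column is entrywise `≥ 0`. -/
def IsGreen (B : Matrix ι ι ℤ) (L : List ι) (j : ι) : Prop :=
  ∀ i, 0 ≤ Cmat B L i j

/-- `L` is a green sequence: each mutation occurs at a green index of the current C-matrix. -/
def IsGreenSeq (B : Matrix ι ι ℤ) (L : List ι) : Prop :=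
  ∀ (t : ℕ) (h : t < L.length), IsGreen B (L.take t) (L.get ⟨t, h⟩)

/-- `L` is a green-to-red sequence: the final C-matrix is entrywise `≤ 0`. -/
def IsGreenToRed (B : Matrix ι ι ℤ) (L : List ι) : Prop :=
  ∀ i j, Cmat B L i j ≤ 0

/-- `L` is a maximal green sequence of `B`. -/
def IsMGS (B : Matrix ι ι ℤ) (L : List ι) : Prop :=
  IsGreenSeq B L ∧ IsGreenToRed B L

lemma sgnmax_nonneg (x y : ℤ) (hx : 0 ≤ x) :
    Int.sign x * max (x * y) 0 = x * max y 0 := by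
  rcases hx.lt_or_eq with h | h
  · rw [Int.sign_eq_one_of_pos h, one_mul, mul_max_of_nonneg _ _ hx, mul_zero]
  · simp [← h]

lemma sgnmax_nonpos (x y : ℤ) (hx : x ≤ 0) :
    Int.sign x * max (x * y) 0 = x * max (-y) 0 := by
  rcases hx.lt_or_eq with h | h
  · rw [Int.sign_eq_neg_one_of_neg h]
    have h2 : x * max (-y) 0 = -((-x) * max (-y) 0) := by ring
    rw [h2, mul_max_of_nonneg _ _ (by linarith : (0:ℤ) ≤ -x), mul_zero]
    ring_nf
  · simp [h]

lemma sgnmax_pos_of_nonneg (x y : ℤ) (hx : 0 ≤ x) :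
    0 ≤ Int.sign x * max (x * y) 0 := by
  rw [sgnmax_nonneg x y hx]
  exact mul_nonneg hx (le_max_right _ _)

lemma skew_key (Si Sj u v : ℤ) (hSi : 0 < Si) (hSj : 0 < Sj) :
    Si * (Int.sign u * max (u * -(Sj * v)) 0) = -(Sj * (Int.sign v * max (v * -(Si * u)) 0)) := by
  rcases le_or_gt 0 u with hu | hu <;> rcases le_or_gt 0 v with hv | hv
  · rw [max_eq_right (by nlinarith [mul_nonneg hu (mul_nonneg hSj.le hv), mul_nonneg hv (mul_nonneg hSi.le hu)]),
      max_eq_right (by nlinarith [mul_nonneg hu (mul_nonneg hSj.le hv), mul_nonneg hv (mul_nonneg hSi.le hu)])]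
    ring
  · rw [sgnmax_nonneg _ _ hu, sgnmax_nonpos _ _ hv.le, neg_neg,
      max_eq_left (by nlinarith), max_eq_left (by nlinarith)]
    ring
  · rw [sgnmax_nonpos _ _ hu.le, sgnmax_nonneg _ _ hv, neg_neg,
      max_eq_left (by nlinarith), max_eq_left (by nlinarith)]
    ring
  · rw [max_eq_right (by nlinarith [mul_pos_of_neg_of_neg hu hv]),
      max_eq_right (by nlinarith [mul_pos_of_neg_of_neg hu hv])]
    ring

lemma mutateSeq_concat (L : List ι) (a : ι) (M : Matrix (ι ⊕ ι) ι ℤ) :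
    mutateSeq (L ++ [a]) M = mutate a (mutateSeq L M) := by
  simp [mutateSeq, List.foldl_append]

lemma mutate_skew (S : ι → ℤ) (hS : ∀ i, 0 < S i) (M : Matrix (ι ⊕ ι) ι ℤ) (k : ι)
    (hsk : ∀ i j, S i * M (Sum.inl i) j = -(S j * M (Sum.inl j) i)) :
    ∀ i j, S i * (mutate k M) (Sum.inl i) j = -(S j * (mutate k M) (Sum.inl j) i) := by
  intro i j
  by_cases hi : i = k <;> by_cases hj : j = k
  · subst hi; subst hj; simp only [mutate]
    simp only [true_or, or_true, if_true]
    have := hsk j j; linarith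
  · subst hi
    simp only [mutate]
    simp only [true_or, or_true, if_true]
    have := hsk i j; linarith
  · subst hj
    simp only [mutate]
    simp only [true_or, or_true, if_true]
    have := hsk i j; linarith
  · have c1 : ¬(Sum.inl (α := ι) (β := ι) i = Sum.inl k ∨ j = k) := by simp [hi, hj]
    have c2 : ¬(Sum.inl (α := ι) (β := ι) j = Sum.inl k ∨ i = k) := by simp [hi, hj]
    simp only [mutate, if_neg c1, if_neg c2]
    set u := M (Sum.inl i) k with hu
    set v := M (Sum.inl j) k with hv
    have e1 : S k * M (Sum.inl k) j = -(S j * v) := hsk k j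
    have e2 : S k * M (Sum.inl k) i = -(S i * u) := hsk k i
    have hkne : S k ≠ 0 := (hS k).ne'
    have h1 : S k * max (u * M (Sum.inl k) j) 0 = max (u * -(S j * v)) 0 := by
      rw [mul_max_of_nonneg _ _ (hS k).le, mul_zero,
        show S k * (u * M (Sum.inl k) j) = u * (S k * M (Sum.inl k) j) by ring, e1]
    have h2 : S k * max (v * M (Sum.inl k) i) 0 = max (v * -(S i * u)) 0 := by
      rw [mul_max_of_nonneg _ _ (hS k).le, mul_zero,
        show S k * (v * M (Sum.inl k) i) = v * (S k * M (Sum.inl k) i) by ring, e2]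
    have key := skew_key (S i) (S j) u v (hS i) (hS j)
    have main : S i * (Int.sign u * max (u * M (Sum.inl k) j) 0)
        = -(S j * (Int.sign v * max (v * M (Sum.inl k) i) 0)) := by
      apply mul_left_cancel₀ hkne
      calc S k * (S i * (Int.sign u * max (u * M (Sum.inl k) j) 0))
          = S i * Int.sign u * (S k * max (u * M (Sum.inl k) j) 0) := by ring
        _ = S i * Int.sign u * max (u * -(S j * v)) 0 := by rw [h1]
        _ = S i * (Int.sign u * max (u * -(S j * v)) 0) := by ring
        _ = -(S j * (Int.sign v * max (v * -(S i * u)) 0)) := key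
        _ = -(S j * Int.sign v * max (v * -(S i * u)) 0) := by ring
        _ = -(S j * Int.sign v * (S k * max (v * M (Sum.inl k) i) 0)) := by rw [h2]
        _ = S k * -(S j * (Int.sign v * max (v * M (Sum.inl k) i) 0)) := by ring
    have hij := hsk i j
    calc S i * (M (Sum.inl i) j + Int.sign u * max (u * M (Sum.inl k) j) 0)
        = S i * M (Sum.inl i) j + S i * (Int.sign u * max (u * M (Sum.inl k) j) 0) := by ring
      _ = -(S j * M (Sum.inl j) i) + -(S j * (Int.sign v * max (v * M (Sum.inl k) i) 0)) := by
          rw [hij, main]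
      _ = -(S j * (M (Sum.inl j) i + Int.sign v * max (v * M (Sum.inl k) i) 0)) := by ring

lemma phase1 {n m : ℕ}
    (B : Matrix (Fin n ⊕ Fin m) (Fin n ⊕ Fin m) ℤ)
    (S : Fin n ⊕ Fin m → ℤ) (hS : ∀ i, 0 < S i)
    (hskew : ∀ i j, S i * B i j = -(S j * B j i))
    (hB₂ : ∀ (i : Fin m) (j : Fin n), 0 ≤ B (Sum.inr i) (Sum.inl j))
    (ks : List (Fin n)) (js : List (Fin m))
    (hgr : IsGreenSeq B (ks.map Sum.inl ++ js.map Sum.inr)) :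
    ∀ t, t ≤ ks.length →
    (∀ a j, mutateSeq ((ks.take t).map Sum.inl) (Matrix.fromRows B 1) (Sum.inl (Sum.inl a)) (Sum.inl j)
        = mutateSeq (ks.take t) (Matrix.fromRows (fun i j => B (Sum.inl i) (Sum.inl j)) 1) (Sum.inl a) j) ∧
    (∀ a j, mutateSeq ((ks.take t).map Sum.inl) (Matrix.fromRows B 1) (Sum.inr (Sum.inl a)) (Sum.inl j)
        = mutateSeq (ks.take t) (Matrix.fromRows (fun i j => B (Sum.inl i) (Sum.inl j)) 1) (Sum.inr a) j) ∧
    (∀ (b : Fin m) j, mutateSeq ((ks.take t).map Sum.inl) (Matrix.fromRows B 1) (Sum.inr (Sum.inr b)) j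
        = if j = Sum.inr b then 1 else 0) ∧
    (∀ i j, S i * mutateSeq ((ks.take t).map Sum.inl) (Matrix.fromRows B 1) (Sum.inl i) j
        = -(S j * mutateSeq ((ks.take t).map Sum.inl) (Matrix.fromRows B 1) (Sum.inl j) i)) ∧
    (∀ (b : Fin m) (j : Fin n), mutateSeq ((ks.take t).map Sum.inl) (Matrix.fromRows B 1) (Sum.inl (Sum.inr b)) (Sum.inl j)
        = ∑ i : Fin n, B (Sum.inr b) (Sum.inl i) *
            mutateSeq (ks.take t) (Matrix.fromRows (fun i j => B (Sum.inl i) (Sum.inl j)) 1) (Sum.inr i) j) ∧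
    (∀ (b b' : Fin m), mutateSeq ((ks.take t).map Sum.inl) (Matrix.fromRows B 1) (Sum.inl (Sum.inr b)) (Sum.inr b')
        = B (Sum.inr b) (Sum.inr b')) := by
  intro t
  induction t with
  | zero =>
    intro _
    simp only [List.take_zero, List.map_nil]
    show (∀ _ _, Matrix.fromRows B 1 _ _ = _) ∧ _
    refine ⟨?_, ?_, ?_, ?_, ?_, ?_⟩
    · intro a j; simp [mutateSeq, Matrix.fromRows_apply_inl, Matrix.fromRows_apply_inr]; rfl
    · intro a j; simp [mutateSeq, Matrix.fromRows_apply_inl, Matrix.fromRows_apply_inr, Matrix.one_apply]; rfl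
    · intro b j; simp [mutateSeq, Matrix.fromRows_apply_inl, Matrix.fromRows_apply_inr, Matrix.one_apply, eq_comm]
    · intro i j; simpa [mutateSeq, Matrix.fromRows_apply_inl, Matrix.fromRows_apply_inr] using hskew i j
    · intro b j
      show B (Sum.inr b) (Sum.inl j) = ∑ i : Fin n, B (Sum.inr b) (Sum.inl i) * (1 : Matrix (Fin n) (Fin n) ℤ) i j
      simp [mutateSeq, Matrix.fromRows_apply_inl, Matrix.fromRows_apply_inr, Matrix.one_apply, mul_ite, mul_one, mul_zero,
        Finset.sum_ite_eq']
    · intro b b'; simp [mutateSeq, Matrix.fromRows_apply_inl, Matrix.fromRows_apply_inr]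
  | succ t ih =>
    intro ht1
    have htlt : t < ks.length := ht1
    obtain ⟨h1, h2, h3, h4, h5, h6⟩ := ih htlt.le
    set M := mutateSeq ((ks.take t).map Sum.inl) (Matrix.fromRows B 1) with hM
    set W := mutateSeq (ks.take t) (Matrix.fromRows (fun i j => B (Sum.inl i) (Sum.inl j)) 1) with hW
    set k := ks.get ⟨t, htlt⟩ with hk
    have etake : ks.take (t+1) = ks.take t ++ [k] := by
      rw [List.take_succ, List.getElem?_eq_getElem htlt]
      simp [hk]
    have e1 : mutateSeq ((ks.take (t+1)).map Sum.inl) (Matrix.fromRows B 1)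
        = mutate (Sum.inl k) M := by
      rw [hM, etake, List.map_append, List.map_singleton, mutateSeq_concat]
    have e2 : mutateSeq (ks.take (t+1)) (Matrix.fromRows (fun i j => B (Sum.inl i) (Sum.inl j)) 1)
        = mutate k W := by
      rw [hW, etake, mutateSeq_concat]
    -- greenness of step t
    have hlen : t < (ks.map (Sum.inl : Fin n → Fin n ⊕ Fin m) ++ js.map Sum.inr).length := by
      simp only [List.length_append, List.length_map]; omega
    have hgt : ∀ i, 0 ≤ Cmat B ((ks.map Sum.inl ++ js.map Sum.inr).take t) i
        ((ks.map Sum.inl ++ js.map Sum.inr).get ⟨t, hlen⟩) := hgr t hlen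
    have htake : (ks.map (Sum.inl : Fin n → Fin n ⊕ Fin m) ++ js.map Sum.inr).take t
        = (ks.take t).map Sum.inl := by
      rw [List.take_append_of_le_length (by simpa using htlt.le), List.map_take]
    have hget : (ks.map (Sum.inl : Fin n → Fin n ⊕ Fin m) ++ js.map Sum.inr).get ⟨t, hlen⟩
        = Sum.inl k := by
      simp [hk, List.get_eq_getElem, List.getElem_append_left, htlt]
    have hgreen' : ∀ i, 0 ≤ M (Sum.inr i) (Sum.inl k) := by
      intro i
      have := hgt i
      rw [htake, hget] at this
      simpa only [Cmat, ← hM] using this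
    have hc1 : ∀ a : Fin n, 0 ≤ W (Sum.inr a) k := by
      intro a
      have := hgreen' (Sum.inl a)
      rwa [h2] at this
    have hb2 : ∀ b : Fin m, 0 ≤ M (Sum.inl (Sum.inr b)) (Sum.inl k) := by
      intro b; rw [h5]
      exact Finset.sum_nonneg fun i _ => mul_nonneg (hB₂ b i) (hc1 i)
    have hb3 : ∀ b' : Fin m, M (Sum.inl (Sum.inl k)) (Sum.inr b') ≤ 0 := by
      intro b'
      have h := h4 (Sum.inl k) (Sum.inr b')
      have h0 : S (Sum.inl k) * M (Sum.inl (Sum.inl k)) (Sum.inr b') ≤ 0 := by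
        nlinarith [mul_nonneg (hS (Sum.inr b')).le (hb2 b')]
      nlinarith [hS (Sum.inl k)]
    simp only [e1, e2]
    refine ⟨?_, ?_, ?_, ?_, ?_, ?_⟩
    · intro a j
      simp only [mutate, h1]
      exact if_congr (by simp) rfl rfl
    · intro a j
      simp only [mutate, h1, h2]
      exact if_congr (by simp) rfl rfl
    · intro b j
      simp only [mutate, h3]
      by_cases hj : j = Sum.inl k
      · subst hj
        rw [if_pos (Or.inr rfl)]
        simp
      · rw [if_neg (by simp [hj])]
        simp
    · exact mutate_skew S hS M (Sum.inl k) h4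
    · intro b j
      by_cases hj : j = k
      · subst hj
        have hrhs : ∀ i : Fin n, mutate k W (Sum.inr i) k = -W (Sum.inr i) k := by
          intro i
          simp only [mutate, or_true, if_true]
        rw [Finset.sum_congr rfl (fun i _ => by rw [hrhs i])]
        simp only [mutate, or_true, if_true]
        rw [h5]
        simp [mul_neg, Finset.sum_neg_distrib]
      · have hrhs : ∀ i : Fin n, mutate k W (Sum.inr i) j
            = W (Sum.inr i) j + W (Sum.inr i) k * max (W (Sum.inl k) j) 0 := by
          intro i
          simp only [mutate]
          rw [if_neg (by simp [hj]), sgnmax_nonneg _ _ (hc1 i)]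
        rw [Finset.sum_congr rfl (fun i _ => by rw [hrhs i])]
        simp only [mutate]
        rw [if_neg (by simp [hj]), sgnmax_nonneg _ _ (hb2 b), h1, h5 b j, h5 b k,
          Finset.sum_mul, ← Finset.sum_add_distrib]
        exact Finset.sum_congr rfl fun i _ => by ring
    · intro b b'
      simp only [mutate]
      rw [if_neg (by simp), sgnmax_nonneg _ _ (hb2 b), max_eq_right (hb3 b'), mul_zero,
        add_zero, h6]

lemma phase2 {n m : ℕ}
    (B : Matrix (Fin n ⊕ Fin m) (Fin n ⊕ Fin m) ℤ)
    (ks : List (Fin n)) (js : List (Fin m))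
    (hstart6 : ∀ (b b' : Fin m), mutateSeq (ks.map Sum.inl) (Matrix.fromRows B 1)
        (Sum.inl (Sum.inr b)) (Sum.inr b') = B (Sum.inr b) (Sum.inr b'))
    (hstart3 : ∀ (b : Fin m) j, mutateSeq (ks.map Sum.inl) (Matrix.fromRows B 1)
        (Sum.inr (Sum.inr b)) j = if j = Sum.inr b then 1 else 0) :
    ∀ t, t ≤ js.length →
    (∀ (b : Fin m) (j : Fin m),
        mutateSeq (ks.map Sum.inl ++ (js.take t).map Sum.inr) (Matrix.fromRows B 1)
            (Sum.inl (Sum.inr b)) (Sum.inr j)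
          = mutateSeq (js.take t) (Matrix.fromRows (fun i j => B (Sum.inr i) (Sum.inr j)) 1)
            (Sum.inl b) j) ∧
    (∀ (b : Fin m) (j : Fin m),
        mutateSeq (ks.map Sum.inl ++ (js.take t).map Sum.inr) (Matrix.fromRows B 1)
            (Sum.inr (Sum.inr b)) (Sum.inr j)
          = mutateSeq (js.take t) (Matrix.fromRows (fun i j => B (Sum.inr i) (Sum.inr j)) 1)
            (Sum.inr b) j) := by
  intro t
  induction t with
  | zero =>
    intro _
    simp only [List.take_zero, List.map_nil, List.append_nil]
    constructor
    · intro b j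
      rw [hstart6 b j]
      simp [mutateSeq, Matrix.fromRows_apply_inl, Matrix.fromRows_apply_inr]; rfl
    · intro b j
      rw [hstart3 b (Sum.inr j)]
      simp [mutateSeq, Matrix.fromRows_apply_inl, Matrix.fromRows_apply_inr, Matrix.one_apply, eq_comm]; rfl
  | succ t ih =>
    intro ht1
    have htlt : t < js.length := ht1
    obtain ⟨g1, g2⟩ := ih htlt.le
    set M := mutateSeq (ks.map Sum.inl ++ (js.take t).map Sum.inr) (Matrix.fromRows B 1) with hM
    set W := mutateSeq (js.take t) (Matrix.fromRows (fun i j => B (Sum.inr i) (Sum.inr j)) 1) with hW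
    set k := js.get ⟨t, htlt⟩ with hk
    have etake : js.take (t+1) = js.take t ++ [k] := by
      rw [List.take_succ, List.getElem?_eq_getElem htlt]
      simp [hk]
    have e1 : mutateSeq (ks.map Sum.inl ++ (js.take (t+1)).map Sum.inr) (Matrix.fromRows B 1)
        = mutate (Sum.inr k) M := by
      rw [hM, etake, List.map_append, List.map_singleton, ← List.append_assoc, mutateSeq_concat]
    have e2 : mutateSeq (js.take (t+1)) (Matrix.fromRows (fun i j => B (Sum.inr i) (Sum.inr j)) 1)
        = mutate k W := by
      rw [hW, etake, mutateSeq_concat]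
    simp only [e1, e2]
    constructor
    · intro b j
      simp only [mutate, g1]
      exact if_congr (by simp) rfl rfl
    · intro b j
      simp only [mutate, g1, g2]
      exact if_congr (by simp) rfl rfl

lemma phase2_mono {n m : ℕ}
    (B : Matrix (Fin n ⊕ Fin m) (Fin n ⊕ Fin m) ℤ)
    (ks : List (Fin n)) (js : List (Fin m))
    (hgr : IsGreenSeq B (ks.map Sum.inl ++ js.map Sum.inr)) :
    ∀ t, t ≤ js.length → ∀ (a : Fin n) (j : Fin n),
      mutateSeq (ks.map Sum.inl) (Matrix.fromRows B 1) (Sum.inr (Sum.inl a)) (Sum.inl j)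
        ≤ mutateSeq (ks.map Sum.inl ++ (js.take t).map Sum.inr) (Matrix.fromRows B 1)
            (Sum.inr (Sum.inl a)) (Sum.inl j) := by
  intro t
  induction t with
  | zero =>
    intro _ a j
    simp
  | succ t ih =>
    intro ht1 a j
    have htlt : t < js.length := ht1
    set M := mutateSeq (ks.map Sum.inl ++ (js.take t).map Sum.inr) (Matrix.fromRows B 1) with hM
    set k := js.get ⟨t, htlt⟩ with hk
    have etake : js.take (t+1) = js.take t ++ [k] := by
      rw [List.take_succ, List.getElem?_eq_getElem htlt]
      simp [hk]
    have e1 : mutateSeq (ks.map Sum.inl ++ (js.take (t+1)).map Sum.inr) (Matrix.fromRows B 1)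
        = mutate (Sum.inr k) M := by
      rw [hM, etake, List.map_append, List.map_singleton, ← List.append_assoc, mutateSeq_concat]
    rw [e1]
    -- greenness of step ks.length + t
    have hlen : ks.length + t < (ks.map (Sum.inl : Fin n → Fin n ⊕ Fin m)
        ++ js.map Sum.inr).length := by
      simp only [List.length_append, List.length_map]; omega
    have hgt : ∀ i, 0 ≤ Cmat B ((ks.map Sum.inl ++ js.map Sum.inr).take (ks.length + t)) i
        ((ks.map Sum.inl ++ js.map Sum.inr).get ⟨ks.length + t, hlen⟩) := hgr (ks.length + t) hlen
    have htake : (ks.map (Sum.inl : Fin n → Fin n ⊕ Fin m) ++ js.map Sum.inr).take (ks.length + t)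
        = ks.map Sum.inl ++ (js.take t).map Sum.inr := by
      rw [show ks.length = (ks.map (Sum.inl : Fin n → Fin n ⊕ Fin m)).length by simp,
        List.take_append, List.map_take]
      simp
    have hget : (ks.map (Sum.inl : Fin n → Fin n ⊕ Fin m) ++ js.map Sum.inr).get
        ⟨ks.length + t, hlen⟩ = Sum.inr k := by
      have h2 : (ks.map (Sum.inl : Fin n → Fin n ⊕ Fin m)).length
          ≤ ks.length + t := by simp
      simp [hk, List.get_eq_getElem, List.getElem_append_right h2, htlt]
    have hx : 0 ≤ M (Sum.inr (Sum.inl a)) (Sum.inr k) := by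
      have := hgt (Sum.inl a)
      rw [htake, hget] at this
      simpa only [Cmat, ← hM] using this
    have hcond : ¬((Sum.inr (Sum.inl a) : (Fin n ⊕ Fin m) ⊕ (Fin n ⊕ Fin m))
        = Sum.inl (Sum.inr k) ∨ (Sum.inl j : Fin n ⊕ Fin m) = Sum.inr k) := by simp
    calc mutateSeq (ks.map Sum.inl) (Matrix.fromRows B 1) (Sum.inr (Sum.inl a)) (Sum.inl j)
        ≤ M (Sum.inr (Sum.inl a)) (Sum.inl j) := ih htlt.le a j
      _ ≤ mutate (Sum.inr k) M (Sum.inr (Sum.inl a)) (Sum.inl j) := by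
          simp only [mutate]
          rw [if_neg hcond]
          exact le_add_of_nonneg_right (sgnmax_pos_of_nonneg _ _ hx)


/-- If a concatenated sequence (first mutating in the first block, then in the second)
is a maximal green sequence of `B` and the bottom-left block is nonnegative, then the
two halves are maximal green sequences of the corresponding diagonal blocks. -/
theorem mgs_to_blocks {n m : ℕ}
    (B : Matrix (Fin n ⊕ Fin m) (Fin n ⊕ Fin m) ℤ)
    (S : Fin n ⊕ Fin m → ℤ) (hS : ∀ i, 0 < S i)
    (hskew : ∀ i j, S i * B i j = -(S j * B j i))
    (hB₂ : ∀ (i : Fin m) (j : Fin n), 0 ≤ B (Sum.inr i) (Sum.inl j))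
    (ks : List (Fin n)) (js : List (Fin m))
    (h : IsMGS B (ks.map Sum.inl ++ js.map Sum.inr)) :
    IsMGS (fun i j => B (Sum.inl i) (Sum.inl j)) ks ∧
      IsMGS (fun i j => B (Sum.inr i) (Sum.inr j)) js := by
  replace h : IsGreenSeq B (ks.map Sum.inl ++ js.map Sum.inr)
      ∧ IsGreenToRed B (ks.map Sum.inl ++ js.map Sum.inr) := h
  obtain ⟨hgr, hred⟩ := h
  have Φ := phase1 B S hS hskew hB₂ ks js hgr
  obtain ⟨p1, p2, p3, p4, p5, p6⟩ := Φ ks.length le_rfl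
  rw [List.take_length] at p1 p2 p3 p4 p5 p6
  have Ψ := phase2 B ks js p6 p3
  obtain ⟨q1f, q2f⟩ := Ψ js.length le_rfl
  rw [List.take_length] at q1f q2f
  have mono := phase2_mono B ks js hgr js.length le_rfl
  rw [List.take_length] at mono
  refine ⟨⟨?_, ?_⟩, ?_, ?_⟩
  · -- IsGreenSeq B₁ ks
    intro t ht
    obtain ⟨r1, r2, r3, r4, r5, r6⟩ := Φ t ht.le
    intro i
    have hlen : t < (ks.map (Sum.inl : Fin n → Fin n ⊕ Fin m) ++ js.map Sum.inr).length := by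
      simp only [List.length_append, List.length_map]; omega
    have hgt := hgr t hlen
    have htake : (ks.map (Sum.inl : Fin n → Fin n ⊕ Fin m) ++ js.map Sum.inr).take t
        = (ks.take t).map Sum.inl := by
      rw [List.take_append_of_le_length (by simpa using ht.le), List.map_take]
    have hget : (ks.map (Sum.inl : Fin n → Fin n ⊕ Fin m) ++ js.map Sum.inr).get ⟨t, hlen⟩
        = Sum.inl (ks.get ⟨t, ht⟩) := by
      simp [List.get_eq_getElem, List.getElem_append_left, ht]
    have key : (0:ℤ) ≤ Cmat B ((ks.map Sum.inl ++ js.map Sum.inr).take t) (Sum.inl i)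
        ((ks.map Sum.inl ++ js.map Sum.inr).get ⟨t, hlen⟩) := hgt (Sum.inl i)
    rw [htake, hget] at key
    show (0:ℤ) ≤ mutateSeq (ks.take t)
        (Matrix.fromRows (fun i j => B (Sum.inl i) (Sum.inl j)) 1) (Sum.inr i) (ks.get ⟨t, ht⟩)
    rw [← r2]
    exact key
  · -- IsGreenToRed B₁ ks
    intro i j
    show mutateSeq ks (Matrix.fromRows (fun i j => B (Sum.inl i) (Sum.inl j)) 1) (Sum.inr i) j ≤ 0
    rw [← p2]
    calc mutateSeq (ks.map Sum.inl) (Matrix.fromRows B 1) (Sum.inr (Sum.inl i)) (Sum.inl j)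
        ≤ mutateSeq (ks.map Sum.inl ++ js.map Sum.inr) (Matrix.fromRows B 1)
            (Sum.inr (Sum.inl i)) (Sum.inl j) := mono i j
      _ ≤ 0 := hred (Sum.inl i) (Sum.inl j)
  · -- IsGreenSeq B₄ js
    intro t ht
    obtain ⟨r1, r2⟩ := Ψ t ht.le
    intro i
    have hlen : ks.length + t < (ks.map (Sum.inl : Fin n → Fin n ⊕ Fin m)
        ++ js.map Sum.inr).length := by
      simp only [List.length_append, List.length_map]; omega
    have hgt := hgr (ks.length + t) hlen
    have htake : (ks.map (Sum.inl : Fin n → Fin n ⊕ Fin m) ++ js.map Sum.inr).take (ks.length + t)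
        = ks.map Sum.inl ++ (js.take t).map Sum.inr := by
      rw [show ks.length = (ks.map (Sum.inl : Fin n → Fin n ⊕ Fin m)).length by simp,
        List.take_append, List.map_take]
      simp
    have hget : (ks.map (Sum.inl : Fin n → Fin n ⊕ Fin m) ++ js.map Sum.inr).get
        ⟨ks.length + t, hlen⟩ = Sum.inr (js.get ⟨t, ht⟩) := by
      have h2 : (ks.map (Sum.inl : Fin n → Fin n ⊕ Fin m)).length ≤ ks.length + t := by simp
      simp [List.get_eq_getElem, List.getElem_append_right h2, ht]
    have key : (0:ℤ) ≤ Cmat B ((ks.map Sum.inl ++ js.map Sum.inr).take (ks.length + t))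
        (Sum.inr i) ((ks.map Sum.inl ++ js.map Sum.inr).get ⟨ks.length + t, hlen⟩) :=
      hgt (Sum.inr i)
    rw [htake, hget] at key
    show (0:ℤ) ≤ mutateSeq (js.take t)
        (Matrix.fromRows (fun i j => B (Sum.inr i) (Sum.inr j)) 1) (Sum.inr i) (js.get ⟨t, ht⟩)
    rw [← r2]
    exact key
  · -- IsGreenToRed B₄ js
    intro i j
    show mutateSeq js (Matrix.fromRows (fun i j => B (Sum.inr i) (Sum.inr j)) 1) (Sum.inr i) j ≤ 0
    rw [← q2f]
    exact hred (Sum.inr i) (Sum.inr j)
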